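/- Suppose λ10 > 1 and λ20/λ10 + λ21·(1 − 1/λ10) > 1 + δ. Then the equilibrium p1 = (1 − 1/λ10, 0) attracts no points of Λ+: there is no solution u : [0,∞) → ℝ² of u' = F(u) with u(0) ∈ Λ+ and u(t) → (1 − 1/λ10, 0) as t → ∞. -/

import Mathlib

open Filter Topology Set

/-- Mean-field vector field of the generalized stacked contact process. -/
noncomputable def meanField (l10 l20 l21 δ : ℝ) (p : ℝ × ℝ) : ℝ × ℝ :=
  (l10 * p.1 * (1 - p.1 - p.2) - p.1 + δ * p.2 - l21 * p.1 * p.2,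
   l20 * p.2 * (1 - p.1 - p.2) - p.2 - δ * p.2 + l21 * p.1 * p.2)

/-- The feasible region Λ. -/
def lambdaRegion : Set (ℝ × ℝ) := {p | 0 ≤ p.1 ∧ 0 ≤ p.2 ∧ p.1 + p.2 ≤ 1}

/-- The region Λ₊ : if δ = 0 both coordinates positive, if δ > 0 only u₂ > 0. -/
def lambdaPlus (δ : ℝ) : Set (ℝ × ℝ) :=
  {p | p ∈ lambdaRegion ∧ 0 < p.2 ∧ (δ = 0 → 0 < p.1)}

/-- A solution of the mean-field ODE on [0,∞). -/
def IsSolution (l10 l20 l21 δ : ℝ) (u : ℝ → ℝ × ℝ) : Prop :=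
  ∀ t : ℝ, 0 ≤ t → HasDerivWithinAt u (meanField l10 l20 l21 δ (u t)) (Set.Ici 0) t

private lemma hasDerivWithinAt_snd' {u : ℝ → ℝ × ℝ} {p : ℝ × ℝ} {s : Set ℝ} {t : ℝ}
    (h : HasDerivWithinAt u p s t) :
    HasDerivWithinAt (fun t => (u t).2) p.2 s t := by
  have h2 := h.hasFDerivWithinAt.snd
  simpa using h2.hasDerivWithinAt

/-- If λ10 > 1 and the (2s invade 1s) inequality holds, the equilibrium
p₁ = (1 − 1/λ10, 0) attracts no points of Λ₊. -/
theorem p1_attracts_no_point_of_lambdaPlus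
    (l10 l20 l21 δ : ℝ) (h10 : 0 ≤ l10) (h20 : 0 ≤ l20) (h21 : 0 ≤ l21) (hδ : 0 ≤ δ)
    (h10gt : 1 < l10)
    (h2in1 : l20 / l10 + l21 * (1 - 1 / l10) > 1 + δ) :
    ¬ ∃ u : ℝ → ℝ × ℝ, IsSolution l10 l20 l21 δ u ∧ u 0 ∈ lambdaPlus δ ∧
        Tendsto u atTop (𝓝 ((1 - 1 / l10, 0) : ℝ × ℝ)) := by
  rintro ⟨u, hsol, hu0, hlim⟩
  -- notation
  set g : ℝ → ℝ := fun t => l20 * (1 - (u t).1 - (u t).2) - 1 - δ + l21 * (u t).1 with hg_def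
  have hu2deriv : ∀ t : ℝ, 0 ≤ t →
      HasDerivWithinAt (fun s => (u s).2) ((u t).2 * g t) (Set.Ici 0) t := by
    intro t ht
    have h := hasDerivWithinAt_snd' (hsol t ht)
    have : (meanField l10 l20 l21 δ (u t)).2 = (u t).2 * g t := by
      simp only [meanField, hg_def]; ring
    rwa [this] at h
  have hucont : ContinuousOn u (Set.Ici 0) := fun t ht =>
    (hsol t ht).continuousWithinAt
  have hu2cont : ContinuousOn (fun s => (u s).2) (Set.Ici 0) :=
    continuous_snd.comp_continuousOn hucont
  have hgcont : ContinuousOn g (Set.Ici 0) := by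
    apply ContinuousOn.add
    · apply ContinuousOn.sub
      · apply ContinuousOn.sub
        · exact continuousOn_const.mul
            ((continuousOn_const.sub (continuous_fst.comp_continuousOn hucont)).sub hu2cont)
        · exact continuousOn_const
      · exact continuousOn_const
    · exact continuousOn_const.mul (continuous_fst.comp_continuousOn hucont)
  have hu20 : 0 < (u 0).2 := hu0.2.1
  -- Positivity of the second coordinate for all times
  have hpos : ∀ t : ℝ, 0 ≤ t → 0 < (u t).2 := by
    intro t1 ht1
    by_contra hle
    push_neg at hle
    -- first nonpositive time
    set S : Set ℝ := {t ∈ Set.Icc 0 t1 | (u t).2 ≤ 0} with hS_def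
    have hScomp : IsCompact S := by
      apply (isCompact_Icc (a := (0:ℝ)) (b := t1)).of_isClosed_subset
      · have : S = Set.Icc 0 t1 ∩ (fun s => (u s).2) ⁻¹' Set.Iic 0 := by
          ext x; simp [hS_def, Set.mem_sep_iff, and_comm]
        rw [this]
        exact (hu2cont.mono (Set.Icc_subset_Ici_self)).preimage_isClosed_of_isClosed
          isClosed_Icc isClosed_Iic
      · exact fun x hx => hx.1
    have hSne : S.Nonempty := ⟨t1, ⟨⟨ht1, le_refl t1⟩, hle⟩⟩
    obtain ⟨ht0S⟩ : ∃ _ : sInf S ∈ S, True := ⟨hScomp.sInf_mem hSne, trivial⟩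
    set t0 := sInf S with ht0_def
    have ht0mem : t0 ∈ Set.Icc 0 t1 := ht0S.1
    have ht0le : (u t0).2 ≤ 0 := ht0S.2
    have hposlt : ∀ x, 0 ≤ x → x < t0 → 0 < (u x).2 := by
      intro x hx hxt0
      by_contra hx2
      push_neg at hx2
      have : x ∈ S := ⟨⟨hx, hxt0.le.trans ht0mem.2⟩, hx2⟩
      exact absurd (csInf_le hScomp.bddBelow this) (not_le.mpr hxt0)
    -- bound on g on [0, t1]
    obtain ⟨K, hK⟩ := (isCompact_Icc (a := (0:ℝ)) (b := t1)).exists_bound_of_continuousOn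
      (hgcont.mono Set.Icc_subset_Ici_self)
    -- the function v = u₂ · exp(K·)
    set v : ℝ → ℝ := fun s => (u s).2 * Real.exp (K * s) with hv_def
    have hvmono : MonotoneOn v (Set.Icc 0 t0) := by
      apply monotoneOn_of_hasDerivWithinAt_nonneg (convex_Icc 0 t0)
        (f' := fun x => ((u x).2 * g x) * Real.exp (K * x) + (u x).2 * (Real.exp (K * x) * K))
      · exact ((hu2cont.mono (Set.Icc_subset_Ici_self)).mul
          (Real.continuous_exp.comp (continuous_const.mul continuous_id)).continuousOn)
      · intro x hx
        rw [interior_Icc] at hx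
        have hx0 : (0:ℝ) < x := hx.1
        have hd : HasDerivAt (fun s => (u s).2) ((u x).2 * g x) x :=
          (hu2deriv x hx0.le).hasDerivAt (Ici_mem_nhds hx0)
        have he : HasDerivAt (fun s => Real.exp (K * s)) (Real.exp (K * x) * K) x := by
          have := (Real.hasDerivAt_exp (K * x)).comp x
            ((hasDerivAt_id x).const_mul K)
          simpa using ((hasDerivAt_id x).const_mul K).exp
        exact (hd.mul he).hasDerivWithinAt
      · intro x hx
        rw [interior_Icc] at hx
        have hu2x : 0 < (u x).2 := hposlt x hx.1.le hx.2
        have hxI : x ∈ Set.Icc 0 t1 := ⟨hx.1.le, hx.2.le.trans ht0mem.2⟩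
        have hgK : -K ≤ g x := by
          have := hK x hxI
          have := abs_le.mp (by simpa using this)
          linarith [this.1]
        have hexp : 0 < Real.exp (K * x) := Real.exp_pos _
        have : ((u x).2 * g x) * Real.exp (K * x) + (u x).2 * (Real.exp (K * x) * K)
            = (u x).2 * Real.exp (K * x) * (g x + K) := by ring
        rw [this]
        have : 0 ≤ g x + K := by linarith
        positivity
    have h0mem : (0:ℝ) ∈ Set.Icc 0 t0 := ⟨le_refl 0, ht0mem.1⟩
    have ht0mem' : t0 ∈ Set.Icc 0 t0 := ⟨ht0mem.1, le_refl t0⟩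
    have := hvmono h0mem ht0mem' ht0mem.1
    have hv0 : 0 < v 0 := by
      simp only [hv_def]
      positivity
    have hvt0 : v t0 ≤ 0 := by
      simp only [hv_def]
      exact mul_nonpos_of_nonpos_of_nonneg ht0le (Real.exp_pos _).le
    linarith
  -- the limiting growth rate is positive
  set c : ℝ := l20 * (1 - (1 - 1 / l10) - 0) - 1 - δ + l21 * (1 - 1 / l10) with hc_def
  have hc : 0 < c := by
    have h1 : l20 * (1 - (1 - 1 / l10) - 0) = l20 / l10 := by
      field_simp
      ring
    rw [hc_def, h1]
    linarith
  have hGcont : Continuous (fun p : ℝ × ℝ => l20 * (1 - p.1 - p.2) - 1 - δ + l21 * p.1) := by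
    fun_prop
  have hgtend : Tendsto g atTop (𝓝 c) := by
    have := (hGcont.tendsto ((1 - 1 / l10, 0) : ℝ × ℝ)).comp hlim
    exact this
  have hev : ∀ᶠ t in atTop, 0 < g t := hgtend.eventually (eventually_gt_nhds hc)
  obtain ⟨T0, hT0⟩ := eventually_atTop.mp hev
  set T := max T0 0 with hT_def
  have hT0' : ∀ t, T ≤ t → 0 < g t := fun t ht => hT0 t ((le_max_left _ _).trans ht)
  have hTnn : (0:ℝ) ≤ T := le_max_right _ _
  -- u₂ is monotone on [T, ∞)
  have hmono : MonotoneOn (fun s => (u s).2) (Set.Ici T) := by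
    apply monotoneOn_of_hasDerivWithinAt_nonneg (convex_Ici T)
      (f' := fun x => (u x).2 * g x)
    · exact hu2cont.mono (Set.Ici_subset_Ici.mpr hTnn)
    · intro x hx
      rw [interior_Ici] at hx
      have hx0 : (0:ℝ) < x := lt_of_le_of_lt hTnn hx
      exact ((hu2deriv x hx0.le).hasDerivAt (Ici_mem_nhds hx0)).hasDerivWithinAt
    · intro x hx
      rw [interior_Ici] at hx
      have h1 := hpos x (hTnn.trans hx.le)
      have h2 := hT0' x hx.le
      positivity
  have hu2T : 0 < (u T).2 := hpos T hTnn
  -- but u₂ → 0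
  have hu2lim : Tendsto (fun s => (u s).2) atTop (𝓝 (0:ℝ)) :=
    (continuous_snd.tendsto _).comp hlim
  have hev2 : ∀ᶠ t in atTop, (u t).2 < (u T).2 := hu2lim.eventually (eventually_lt_nhds hu2T)
  obtain ⟨T1, hT1⟩ := eventually_atTop.mp hev2
  set t := max T T1 with ht_def
  have h1 : (u T).2 ≤ (u t).2 :=
    hmono (Set.self_mem_Ici) (Set.mem_Ici.mpr (le_max_left _ _)) (le_max_left _ _)
  have h2 : (u t).2 < (u T).2 := hT1 t (le_max_right _ _)
  linarith
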